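/- Let G be a subgroup of GL₂(𝔽_p) for an odd prime p. If O_p(G) = {1} (G has no nontrivial normal p-subgroup) and p divides |G|, then G contains a subgroup isomorphic to SL₂(𝔽_p) (indeed SL₂(𝔽_p) ⊆ G). -/

import Mathlib

open Matrix

namespace Stmt4Aux
variable {F : Type*} [Field F]

def E12 (t : F) : Matrix (Fin 2) (Fin 2) F := !![1, t; 0, 1]
def E21 (t : F) : Matrix (Fin 2) (Fin 2) F := !![1, 0; t, 1]
def Kw (w : Fin 2 → F) : Matrix (Fin 2) (Fin 2) F :=
  !![w 0 * w 1, -(w 0 * w 0); w 1 * w 1, -(w 1 * w 0)]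

lemma Kw_mul_Kw (w : Fin 2 → F) : Kw w * Kw w = 0 := by
  ext i j
  fin_cases i <;> fin_cases j <;>
    simp [Kw, Matrix.mul_apply, Fin.sum_univ_two] <;> ring

lemma Kw_mulVec (w v : Fin 2 → F) :
    (Kw w).mulVec v = (w 1 * v 0 - w 0 * v 1) • w := by
  funext i
  fin_cases i <;>
    simp [Kw, Matrix.mulVec, dotProduct, Fin.sum_univ_two] <;> ring

-- square of 2x2 with det 0
lemma sq_of_det_zero (N : Matrix (Fin 2) (Fin 2) F)
    (h : N 0 0 * N 1 1 - N 0 1 * N 1 0 = 0) :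
    N * N = (N 0 0 + N 1 1) • N := by
  ext i j
  fin_cases i <;> fin_cases j <;>
    simp [Matrix.mul_apply, Fin.sum_univ_two] <;>
    (first
      | ring1
      | linear_combination h
      | linear_combination -h
      | linear_combination 2*h
      | linear_combination -2*h)

lemma pow_of_sq {N : Matrix (Fin 2) (Fin 2) F} {t : F}
    (h : N * N = t • N) : ∀ n : ℕ, N ^ (n + 1) = t ^ n • N := by
  intro n
  induction n with
  | zero => simp
  | succ n ih =>
      rw [pow_succ, ih, smul_mul_assoc, h, smul_smul, pow_succ]

-- L0': vectors with vanishing "cross product" are parallel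
lemma parallel_of_cross {w v : Fin 2 → F} (hw : w ≠ 0)
    (h : w 1 * v 0 - w 0 * v 1 = 0) : ∃ k : F, v = k • w := by
  have hw' : w 0 ≠ 0 ∨ w 1 ≠ 0 := by
    by_contra hc
    push_neg at hc
    exact hw (funext fun i => by fin_cases i <;> simp [hc.1, hc.2])
  rcases hw' with h0 | h1
  · refine ⟨v 0 / w 0, funext fun i => ?_⟩
    fin_cases i <;> simp [Pi.smul_apply, smul_eq_mul]
    · field_simp
    · field_simp
      linear_combination -h
  · refine ⟨v 1 / w 1, funext fun i => ?_⟩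
    fin_cases i <;> simp [Pi.smul_apply, smul_eq_mul]
    · field_simp
      linear_combination h
    · field_simp

-- L2: trace-zero matrices killing w are multiples of Kw w
lemma eq_smul_Kw {N : Matrix (Fin 2) (Fin 2) F} {w : Fin 2 → F}
    (htr : N 0 0 + N 1 1 = 0) (hker : N.mulVec w = 0) (hw : w ≠ 0) :
    ∃ c : F, N = c • Kw w := by
  have h0 : N 0 0 * w 0 + N 0 1 * w 1 = 0 := by
    have := congrFun hker 0
    simpa [Matrix.mulVec, dotProduct, Fin.sum_univ_two] using this
  have h1 : N 1 0 * w 0 + N 1 1 * w 1 = 0 := by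
    have := congrFun hker 1
    simpa [Matrix.mulVec, dotProduct, Fin.sum_univ_two] using this
  have hw' : w 0 ≠ 0 ∨ w 1 ≠ 0 := by
    by_contra hc
    push_neg at hc
    exact hw (funext fun i => by fin_cases i <;> simp [hc.1, hc.2])
  rcases hw' with hx | hy
  · refine ⟨-(N 0 1) / (w 0 * w 0), ?_⟩
    ext i j
    fin_cases i <;> fin_cases j <;> simp [Kw] <;> field_simp <;>
      (first
        | ring1
        | linear_combination w 0 * h0
        | linear_combination -(w 0 * h0)
        | linear_combination w 0 ^ 2 * htr - w 0 * h0
        | linear_combination -(w 0 ^ 2 * htr - w 0 * h0)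
        | linear_combination w 0 * h1 - w 0 * w 1 * htr + w 1 * h0
        | linear_combination h0
        | linear_combination w 0 * htr - h0
        | linear_combination -(w 0 * h1 - w 0 * w 1 * htr + w 1 * h0))
  · refine ⟨N 1 0 / (w 1 * w 1), ?_⟩
    ext i j
    fin_cases i <;> fin_cases j <;> simp [Kw] <;> field_simp <;>
      (first
        | ring1
        | linear_combination w 1 * h1
        | linear_combination -(w 1 * h1)
        | linear_combination w 1 ^ 2 * htr - w 1 * h1
        | linear_combination -(w 1 ^ 2 * htr - w 1 * h1)
        | linear_combination w 1 * h0 - w 0 * w 1 * htr + w 0 * h1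
        | linear_combination h1
        | linear_combination w 1 * htr - h1
        | linear_combination -(w 1 * h0 - w 0 * w 1 * htr + w 0 * h1))

-- L1: canonical form of nonzero square-zero 2x2 matrix
lemma exists_Kw {N : Matrix (Fin 2) (Fin 2) F} (hN : N ≠ 0) (h2 : N * N = 0) :
    ∃ (w : Fin 2 → F) (c : F), w ≠ 0 ∧ c ≠ 0 ∧ N = c • Kw w := by
  have e00 : N 0 0 * N 0 0 + N 0 1 * N 1 0 = 0 := by
    have := congrFun (congrFun h2 0) 0
    simpa [Matrix.mul_apply, Fin.sum_univ_two] using this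
  have e01 : N 0 0 * N 0 1 + N 0 1 * N 1 1 = 0 := by
    have := congrFun (congrFun h2 0) 1
    simpa [Matrix.mul_apply, Fin.sum_univ_two] using this
  have e10 : N 1 0 * N 0 0 + N 1 1 * N 1 0 = 0 := by
    have := congrFun (congrFun h2 1) 0
    simpa [Matrix.mul_apply, Fin.sum_univ_two] using this
  have e11 : N 1 0 * N 0 1 + N 1 1 * N 1 1 = 0 := by
    have := congrFun (congrFun h2 1) 1
    simpa [Matrix.mul_apply, Fin.sum_univ_two] using this
  have htr : N 0 0 + N 1 1 = 0 := by
    by_cases hb : N 0 1 = 0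
    · by_cases hc : N 1 0 = 0
      · have ha : N 0 0 = 0 := by
          have : N 0 0 * N 0 0 = 0 := by linear_combination e00 - N 1 0 * hb
          exact pow_eq_zero_iff (n := 2) (by norm_num) |>.mp (by linear_combination this)
        have hd : N 1 1 = 0 := by
          have : N 1 1 * N 1 1 = 0 := by linear_combination e11 - N 0 1 * hc
          exact pow_eq_zero_iff (n := 2) (by norm_num) |>.mp (by linear_combination this)
        rw [ha, hd, add_zero]
      · have := mul_eq_zero.mp (show N 1 0 * (N 0 0 + N 1 1) = 0 by linear_combination e10)
        tauto
    · have := mul_eq_zero.mp (show N 0 1 * (N 0 0 + N 1 1) = 0 by linear_combination e01)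
      tauto
  have hker : N.mulVec ![N 0 1, -(N 0 0)] = 0 ∨ N.mulVec ![N 1 1, -(N 1 0)] = 0 := by
    left
    funext i
    fin_cases i <;> simp [Matrix.mulVec, dotProduct, Fin.sum_univ_two]
    · ring
    · linear_combination e00 - N 0 0 * htr
  by_cases hb : N 0 1 = 0
  · -- first column approach: N = !![a, 0; c, -a] with a*a = 0 so a = 0
    have ha : N 0 0 = 0 := by
      have : N 0 0 * N 0 0 = 0 := by linear_combination e00 - N 1 0 * hb
      exact pow_eq_zero_iff (n := 2) (by norm_num) |>.mp (by linear_combination this)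
    have hd : N 1 1 = 0 := by linear_combination htr - ha
    have hc : N 1 0 ≠ 0 := by
      intro hc
      apply hN
      ext i j
      fin_cases i <;> fin_cases j <;> simp [ha, hb, hc, hd]
    refine ⟨![0, N 1 0], (N 1 0)⁻¹, ?_, inv_ne_zero hc, ?_⟩
    · intro h
      exact hc (by simpa using congrFun h 1)
    · ext i j
      fin_cases i <;> fin_cases j <;> simp [Kw, ha, hb, hd] <;> field_simp
  · refine ⟨![N 0 1, -(N 0 0)], -(N 0 1)⁻¹, ?_, neg_ne_zero.mpr (inv_ne_zero hb), ?_⟩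
    · intro h
      exact hb (by simpa using congrFun h 0)
    · ext i j
      fin_cases i <;> fin_cases j <;> simp [Kw] <;> field_simp <;>
        (first
          | ring1
          | linear_combination N 0 1 * htr
          | linear_combination -(N 0 1 * htr)
          | linear_combination e00 + N 0 0 * htr - N 1 0 * hb
          | linear_combination -(e00 + N 0 0 * htr - N 1 0 * hb)
          | linear_combination N 0 1 * htr - hb
          | linear_combination e00
          | linear_combination htr
          | linear_combination -htr)

lemma E12_pow (t : F) : ∀ n : ℕ, (E12 t) ^ n = E12 ((n : F) * t) := by
  intro n
  induction n with
  | zero =>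
      ext i j
      fin_cases i <;> fin_cases j <;> simp [E12]
  | succ n ih =>
      rw [pow_succ, ih]
      ext i j
      fin_cases i <;> fin_cases j <;>
        simp [E12, Matrix.mul_apply, Fin.sum_univ_two] <;> push_cast <;> ring

lemma E21_pow (t : F) : ∀ n : ℕ, (E21 t) ^ n = E21 ((n : F) * t) := by
  intro n
  induction n with
  | zero =>
      ext i j
      fin_cases i <;> fin_cases j <;> simp [E21]
  | succ n ih =>
      rw [pow_succ, ih]
      ext i j
      fin_cases i <;> fin_cases j <;>
        simp [E21, Matrix.mul_apply, Fin.sum_univ_two] <;> push_cast <;> ring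

lemma conj_pow {R : Type*} [Ring R] {Q Qi A : R} (hQQi : Q * Qi = 1)
    (hQiQ : Qi * Q = 1) (n : ℕ) : (Q * A * Qi) ^ n = Q * A ^ n * Qi := by
  induction n with
  | zero => simp [hQQi]
  | succ n ih =>
      rw [pow_succ, ih, pow_succ]
      simp only [mul_assoc]
      rw [← mul_assoc Qi Q, hQiQ, one_mul]

lemma unip_mul {w : Fin 2 → F} (c d : F) :
    (1 + c • Kw w) * (1 + d • Kw w) = 1 + (c + d) • Kw w := by
  have hK := Kw_mul_Kw w
  simp only [mul_add, add_mul, one_mul, mul_one, smul_mul_assoc,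
    mul_smul_comm, smul_smul, hK, smul_zero, add_zero]
  rw [add_smul]
  abel

lemma unip_pow {w : Fin 2 → F} (c : F) :
    ∀ n : ℕ, (1 + c • Kw w) ^ n = 1 + ((n : F) * c) • Kw w := by
  intro n
  induction n with
  | zero => simp
  | succ n ih =>
      rw [pow_succ, ih, unip_mul]
      have h : (n : F) * c + c = ((n + 1 : ℕ) : F) * c := by push_cast; ring
      rw [h]

-- decomposition into elementary matrices, case lower-left nonzero
lemma dec_of_ne {S : Matrix (Fin 2) (Fin 2) F}
    (hdet : S 0 0 * S 1 1 - S 0 1 * S 1 0 = 1) (hc : S 1 0 ≠ 0) :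
    ∃ x y z : F, S = E12 x * E21 y * E12 z := by
  refine ⟨(S 0 0 - 1) / S 1 0, S 1 0, (S 1 1 - 1) / S 1 0, ?_⟩
  ext i j
  fin_cases i <;> fin_cases j <;>
    simp [E12, E21, Matrix.mul_apply, Fin.sum_univ_two] <;> field_simp <;>
      (first
        | ring1
        | linear_combination hdet
        | linear_combination -hdet
        | linear_combination S 1 0 * hdet
        | linear_combination -(S 1 0) * hdet)

lemma dec_full {S : Matrix (Fin 2) (Fin 2) F}
    (hdet : S 0 0 * S 1 1 - S 0 1 * S 1 0 = 1) :
    ∃ r x y z : F, S = E21 r * E12 x * E21 y * E12 z := by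
  by_cases hc : S 1 0 ≠ 0
  · obtain ⟨x, y, z, h⟩ := dec_of_ne hdet hc
    refine ⟨0, x, y, z, ?_⟩
    have hE : E21 (0 : F) = 1 := by
      ext i j
      fin_cases i <;> fin_cases j <;> simp [E21]
    rw [hE, one_mul]
    exact h
  · push_neg at hc
    set S' := E21 (1 : F) * S with hS'
    have h10 : S' 1 0 = S 0 0 := by
      simp [hS', E21, Matrix.mul_apply, Matrix.vecMul, dotProduct, Fin.sum_univ_two, hc]
    have ha : S 0 0 ≠ 0 := by
      intro h
      rw [h, hc] at hdet
      simp at hdet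
    have hdet' : S' 0 0 * S' 1 1 - S' 0 1 * S' 1 0 = 1 := by
      simp [hS', E21, Matrix.mul_apply, Matrix.vecMul, dotProduct, Fin.sum_univ_two]
      linear_combination hdet
    obtain ⟨x, y, z, h⟩ := dec_of_ne hdet' (h10 ▸ ha)
    refine ⟨-1, x, y, z, ?_⟩
    have hinv : E21 (-1 : F) * E21 (1 : F) = 1 := by
      ext i j
      fin_cases i <;> fin_cases j <;>
        simp [E21, Matrix.mul_apply, Fin.sum_univ_two]
    calc S = (E21 (-1 : F) * E21 (1 : F)) * S := by rw [hinv, one_mul]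
      _ = E21 (-1 : F) * S' := by rw [hS', mul_assoc]
      _ = E21 (-1 : F) * (E12 x * E21 y * E12 z) := by rw [h]
      _ = E21 (-1 : F) * E12 x * E21 y * E12 z := by simp [mul_assoc]

end Stmt4Aux

open Stmt4Aux in
set_option maxHeartbeats 1000000 in
theorem stmt_4 {p : ℕ} [Fact p.Prime] (hodd : Odd p)
    (G : Subgroup (GL (Fin 2) (ZMod p)))
    (hO : ∀ N : Subgroup G, N.Normal → IsPGroup p N → N = ⊥)
    (hdvd : p ∣ Nat.card G) :
    (SpecialLinearGroup.toGL (n := Fin 2) (R := ZMod p)).range ≤ G := by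
  classical
  have hp := Fact.out (p := p.Prime)
  haveI : Fintype ↥G := Fintype.ofFinite _
  rw [Nat.card_eq_fintype_card] at hdvd
  obtain ⟨g, hg⟩ := exists_prime_orderOf_dvd_card p hdvd
  set u : GL (Fin 2) (ZMod p) := (g : GL (Fin 2) (ZMod p)) with hu
  have hgG : u ∈ G := g.2
  have horder : orderOf u = p := by
    have h := orderOf_injective G.subtype G.subtype_injective g
    rw [hg] at h
    exact h
  have hup : u ^ p = 1 := by
    have h := pow_orderOf_eq_one u
    rwa [horder] at h
  have hu1 : u ≠ 1 := by
    intro h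
    rw [h, orderOf_one] at horder
    exact hp.one_lt.ne' horder.symm
  set M : Matrix (Fin 2) (Fin 2) (ZMod p) := (u : Matrix (Fin 2) (Fin 2) (ZMod p)) with hM
  have hMp : M ^ p = 1 := by
    rw [hM, ← Units.val_pow_eq_pow_val, hup, Units.val_one]
  have hM1 : M ≠ 1 := fun h => hu1 (Units.ext h)
  set N : Matrix (Fin 2) (Fin 2) (ZMod p) := M - 1 with hN
  have hMN : M = 1 + N := by rw [hN]; abel
  have hNne : N ≠ 0 := by
    intro h
    rw [hN] at h
    exact hM1 (sub_eq_zero.mp h)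
  have hNp : N ^ p = 0 := by
    have h := sub_pow_char_of_commute p (Commute.one_right M)
    rw [hN, h, hMp, one_pow, sub_self]
  have hdetN : N 0 0 * N 1 1 - N 0 1 * N 1 0 = 0 := by
    rw [← Matrix.det_fin_two]
    have h : N.det ^ p = 0 := by rw [← Matrix.det_pow, hNp]; simp
    exact pow_eq_zero_iff hp.ne_zero |>.mp h
  have hsq := sq_of_det_zero N hdetN
  have htr : N 0 0 + N 1 1 = 0 := by
    by_contra h
    have h1 : N ^ p = (N 0 0 + N 1 1) ^ (p - 1) • N := by
      have h2 := pow_of_sq hsq (p - 1)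
      rwa [Nat.sub_add_cancel hp.one_lt.le] at h2
    rw [hNp] at h1
    have h2 : (N 0 0 + N 1 1) ^ (p - 1) ≠ 0 := pow_ne_zero _ h
    exact hNne ((smul_eq_zero.mp h1.symm).resolve_left h2)
  have hN2 : N * N = 0 := by rw [hsq, htr, zero_smul]
  obtain ⟨w, c0, hw, hc0, hNK⟩ := exists_Kw hNne hN2
  by_cases hcase : ∀ x, x ∈ G → ∃ c : ZMod p,
      ((x * u * x⁻¹ : GL (Fin 2) (ZMod p)) : Matrix (Fin 2) (Fin 2) (ZMod p)) = 1 + c • Kw w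
  · -- Case 1: all conjugates unipotent with the same line: contradiction with hO
    exfalso
    let U : Subgroup (GL (Fin 2) (ZMod p)) :=
      { carrier := {A | ∃ c : ZMod p, (A : Matrix (Fin 2) (Fin 2) (ZMod p)) = 1 + c • Kw w}
        one_mem' := ⟨0, by simp⟩
        mul_mem' := by
          rintro A B ⟨c, hc⟩ ⟨c', hc'⟩
          exact ⟨c + c', by rw [Units.val_mul, hc, hc', unip_mul]⟩
        inv_mem' := by
          rintro A ⟨c, hc⟩
          refine ⟨-c, ?_⟩
          have h1 : (A : Matrix (Fin 2) (Fin 2) (ZMod p)) * (1 + (-c) • Kw w) = 1 := by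
            rw [hc, unip_mul]; simp
          exact Units.inv_eq_of_mul_eq_one_right h1 }
    have hconj : ∀ x : G, ∀ c : ZMod p,
        ((x : GL (Fin 2) (ZMod p)) : Matrix (Fin 2) (Fin 2) (ZMod p)) * (1 + c • Kw w) *
          (((x : GL (Fin 2) (ZMod p))⁻¹ : GL (Fin 2) (ZMod p)) : Matrix (Fin 2) (Fin 2) (ZMod p))
          = 1 + (c * (c0⁻¹ * Classical.choose (hcase (x : GL (Fin 2) (ZMod p)) x.2))) • Kw w := by
      intro x c
      set a : GL (Fin 2) (ZMod p) := (x : GL (Fin 2) (ZMod p)) with ha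
      set X : Matrix (Fin 2) (Fin 2) (ZMod p) := (a : Matrix (Fin 2) (Fin 2) (ZMod p)) with hX
      set Xi : Matrix (Fin 2) (Fin 2) (ZMod p) :=
        ((a⁻¹ : GL (Fin 2) (ZMod p)) : Matrix (Fin 2) (Fin 2) (ZMod p)) with hXi
      have hXXi : X * Xi = 1 := by rw [hX, hXi, ← Units.val_mul]; simp
      have hXiX : Xi * X = 1 := by rw [hX, hXi, ← Units.val_mul]; simp
      set cx := Classical.choose (hcase (x : GL (Fin 2) (ZMod p)) x.2) with hcx
      have hcxs := Classical.choose_spec (hcase (x : GL (Fin 2) (ZMod p)) x.2)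
      have hXM : X * M * Xi = 1 + cx • Kw w := by
        rw [hX, hXi, hM]
        rw [← Units.val_mul, ← Units.val_mul]
        exact hcxs
      have hXK : c0 • (X * Kw w * Xi) = cx • Kw w := by
        have h1 : X * (c0 • Kw w) * Xi = X * M * Xi - X * Xi := by
          rw [← hNK, hN]
          rw [mul_sub, sub_mul, mul_one]
        rw [mul_smul_comm, smul_mul_assoc] at h1
        rw [h1, hXM, hXXi]
        abel
      have hXK' : X * Kw w * Xi = (c0⁻¹ * cx) • Kw w := by
        have h2 := congrArg (fun A => c0⁻¹ • A) hXK
        simpa [smul_smul, inv_mul_cancel₀ hc0] using h2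
      calc X * (1 + c • Kw w) * Xi = X * Xi + c • (X * Kw w * Xi) := by
            rw [mul_add, add_mul, mul_smul_comm, smul_mul_assoc, mul_one]
        _ = 1 + (c * (c0⁻¹ * cx)) • Kw w := by rw [hXXi, hXK', smul_smul]
    have hnormal : (U.subgroupOf G).Normal := by
      constructor
      intro n hn x
      rw [Subgroup.mem_subgroupOf] at hn ⊢
      obtain ⟨c, hc⟩ := hn
      refine ⟨c * (c0⁻¹ * Classical.choose (hcase (x : GL (Fin 2) (ZMod p)) x.2)), ?_⟩
      have hcoe : ((↑(x * n * x⁻¹) : GL (Fin 2) (ZMod p)) : Matrix (Fin 2) (Fin 2) (ZMod p))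
          = ((x : GL (Fin 2) (ZMod p)) : Matrix (Fin 2) (Fin 2) (ZMod p)) *
            ((n : GL (Fin 2) (ZMod p)) : Matrix (Fin 2) (Fin 2) (ZMod p)) *
            (((x : GL (Fin 2) (ZMod p))⁻¹ : GL (Fin 2) (ZMod p)) : Matrix (Fin 2) (Fin 2) (ZMod p)) := by
        rfl
      rw [hcoe, hc]
      exact hconj x c
    have hpgroup : IsPGroup p (U.subgroupOf G) := by
      intro n
      refine ⟨1, ?_⟩
      have hn := n.2
      rw [Subgroup.mem_subgroupOf] at hn
      obtain ⟨c, hc⟩ := hn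
      have hmat : (((n : G) : GL (Fin 2) (ZMod p)) : Matrix (Fin 2) (Fin 2) (ZMod p)) ^ p = 1 := by
        rw [hc, unip_pow, ZMod.natCast_self, zero_mul, zero_smul, add_zero]
      have hGL : ((n : G) : GL (Fin 2) (ZMod p)) ^ p = 1 := by
        apply Units.ext
        rw [Units.val_pow_eq_pow_val, Units.val_one]
        exact hmat
      have h2 : (n : G) ^ p = 1 := by
        apply Subtype.ext
        push_cast
        exact hGL
      apply Subtype.ext
      push_cast
      rw [pow_one]
      exact h2
    have hbot := hO _ hnormal hpgroup
    have hgU : g ∈ U.subgroupOf G := by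
      rw [Subgroup.mem_subgroupOf]
      refine ⟨c0, ?_⟩
      show M = 1 + c0 • Kw w
      rw [hMN, hNK]
    rw [hbot, Subgroup.mem_bot] at hgU
    rw [hgU, orderOf_one] at hg
    exact hp.one_lt.ne' hg.symm
  · -- Case 2: a conjugate with a different line; generate SL₂
    push_neg at hcase
    obtain ⟨x, hxG, hx⟩ := hcase
    set Xm : Matrix (Fin 2) (Fin 2) (ZMod p) := (x : Matrix (Fin 2) (Fin 2) (ZMod p)) with hXm
    set Xi : Matrix (Fin 2) (Fin 2) (ZMod p) :=
      ((x⁻¹ : GL (Fin 2) (ZMod p)) : Matrix (Fin 2) (Fin 2) (ZMod p)) with hXi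
    have hXXi : Xm * Xi = 1 := by rw [hXm, hXi, ← Units.val_mul]; simp
    have hXiX : Xi * Xm = 1 := by rw [hXm, hXi, ← Units.val_mul]; simp
    set M2 : Matrix (Fin 2) (Fin 2) (ZMod p) :=
      ((x * u * x⁻¹ : GL (Fin 2) (ZMod p)) : Matrix (Fin 2) (Fin 2) (ZMod p)) with hM2
    have hM2v : M2 = Xm * M * Xi := by
      rw [hM2, Units.val_mul, Units.val_mul]
    set N2 : Matrix (Fin 2) (Fin 2) (ZMod p) := M2 - 1 with hN2def
    have hM2N2 : M2 = 1 + N2 := by rw [hN2def]; abel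
    have hN2conj : N2 = Xm * N * Xi := by
      rw [hN2def, hM2v, hN, mul_sub, sub_mul, mul_one, hXXi]
    have hN2sq : N2 * N2 = 0 := by
      rw [hN2conj]
      calc Xm * N * Xi * (Xm * N * Xi) = Xm * (N * (Xi * Xm) * N) * Xi := by
            simp only [mul_assoc]
        _ = Xm * (N * N) * Xi := by rw [hXiX, mul_one]
        _ = 0 := by rw [hN2, mul_zero, zero_mul]
    have hN2ne : N2 ≠ 0 := by
      intro h
      have h1 : M2 = 1 := by rw [hM2N2, h, add_zero]
      have h2 : (x * u * x⁻¹ : GL (Fin 2) (ZMod p)) = 1 := Units.ext h1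
      have h3 : u = 1 := by
        have := congrArg (fun z => x⁻¹ * z * x) h2
        simpa [mul_assoc] using this
      exact hu1 h3
    have htr2 : N2 0 0 + N2 1 1 = 0 := by
      have h : N2.trace = N.trace := by
        rw [hN2conj, Matrix.trace_mul_comm (Xm * N) Xi, ← mul_assoc, hXiX, one_mul]
      rw [Matrix.trace_fin_two, Matrix.trace_fin_two] at h
      rw [h]
      exact htr
    have hN2w : N2.mulVec w ≠ 0 := by
      intro hker
      obtain ⟨c, hc⟩ := eq_smul_Kw htr2 hker hw
      refine hx c ?_
      show M2 = 1 + c • Kw w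
      rw [hM2N2, hc]
    set w2 : Fin 2 → ZMod p := N2.mulVec w with hw2def
    have hN2w2 : N2.mulVec w2 = 0 := by
      rw [hw2def, Matrix.mulVec_mulVec, hN2sq, Matrix.zero_mulVec]
    have hNw : N.mulVec w = 0 := by
      rw [hNK, Matrix.smul_mulVec, Kw_mulVec]
      have h : w 1 * w 0 - w 0 * w 1 = 0 := by ring
      rw [h, zero_smul, smul_zero]
    have he : w 1 * w2 0 - w 0 * w2 1 ≠ 0 := by
      intro h
      obtain ⟨k, hk⟩ := parallel_of_cross hw h
      have h1 : N2.mulVec w2 = k • w2 := by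
        calc N2.mulVec w2 = N2.mulVec (k • w) := by rw [← hk]
          _ = k • (N2.mulVec w) := by rw [Matrix.mulVec_smul]
          _ = k • w2 := by rw [← hw2def]
      rw [hN2w2] at h1
      rcases smul_eq_zero.mp h1.symm with hk0 | hw20
      · rw [hk0, zero_smul] at hk
        exact hN2w hk
      · exact hN2w hw20
    set e : ZMod p := w 1 * w2 0 - w 0 * w2 1 with hedef
    set d : ZMod p := c0 * e with hddef
    have hd : d ≠ 0 := mul_ne_zero hc0 he
    have hNw2 : N.mulVec w2 = d • w := by
      rw [hNK, Matrix.smul_mulVec, Kw_mulVec, smul_smul, ← hedef, ← hddef]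
    set Qm : Matrix (Fin 2) (Fin 2) (ZMod p) := !![w 0, w2 0; w 1, w2 1] with hQm
    set Qi : Matrix (Fin 2) (Fin 2) (ZMod p) :=
      (-e)⁻¹ • !![w2 1, -(w2 0); -(w 1), w 0] with hQi
    have hene : (-e) ≠ 0 := neg_ne_zero.mpr he
    have hQQi : Qm * Qi = 1 := by
      ext i j
      fin_cases i <;> fin_cases j <;>
        simp [hQm, hQi, Matrix.mul_apply, Fin.sum_univ_two, Matrix.one_apply] <;>
        field_simp <;> ring
    have hQiQ : Qi * Qm = 1 := by
      ext i j
      fin_cases i <;> fin_cases j <;>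
        simp [hQm, hQi, Matrix.mul_apply, Fin.sum_univ_two, Matrix.one_apply] <;>
        field_simp <;> ring
    clear_value Xm Xi M2 N2 w2 e d Qm Qi
    have hcN1 : ∀ i, N i 0 * w 0 + N i 1 * w 1 = 0 := fun i => by
      have h := congrFun hNw i
      simpa [Matrix.mulVec, dotProduct, Fin.sum_univ_two] using h
    have hcN2 : ∀ i, N i 0 * w2 0 + N i 1 * w2 1 = d * w i := fun i => by
      have h := congrFun hNw2 i
      simpa [Matrix.mulVec, dotProduct, Fin.sum_univ_two] using h
    have hcN21 : ∀ i, N2 i 0 * w 0 + N2 i 1 * w 1 = w2 i := fun i => by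
      have h := congrFun hw2def i
      simpa [Matrix.mulVec, dotProduct, Fin.sum_univ_two] using h.symm
    have hcN22 : ∀ i, N2 i 0 * w2 0 + N2 i 1 * w2 1 = 0 := fun i => by
      have h := congrFun hN2w2 i
      simpa [Matrix.mulVec, dotProduct, Fin.sum_univ_two] using h
    have hMQ : M * Qm = Qm * E12 d := by
      rw [hMN]
      ext i j
      fin_cases i <;> fin_cases j <;>
        simp [hQm, E12, Matrix.mul_apply, Fin.sum_univ_two, Matrix.add_apply,
          Matrix.one_apply] <;>
        (first
          | linear_combination hcN1 0
          | linear_combination hcN1 1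
          | linear_combination hcN2 0
          | linear_combination hcN2 1
          | linear_combination -(hcN1 0)
          | linear_combination -(hcN1 1)
          | linear_combination -(hcN2 0)
          | linear_combination -(hcN2 1)
          | ring1)
    have hM2Q : M2 * Qm = Qm * E21 1 := by
      rw [hM2N2]
      ext i j
      fin_cases i <;> fin_cases j <;>
        simp [hQm, E21, Matrix.mul_apply, Fin.sum_univ_two, Matrix.add_apply,
          Matrix.one_apply] <;>
        (first
          | linear_combination hcN21 0
          | linear_combination hcN21 1
          | linear_combination hcN22 0
          | linear_combination hcN22 1
          | linear_combination -(hcN21 0)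
          | linear_combination -(hcN21 1)
          | linear_combination -(hcN22 0)
          | linear_combination -(hcN22 1)
          | ring1)
    have hMconj : M = Qm * E12 d * Qi := by
      calc M = M * (Qm * Qi) := by rw [hQQi, mul_one]
        _ = M * Qm * Qi := (mul_assoc _ _ _).symm
        _ = Qm * E12 d * Qi := by rw [hMQ]
    have hM2conj : M2 = Qm * E21 1 * Qi := by
      calc M2 = M2 * (Qm * Qi) := by rw [hQQi, mul_one]
        _ = M2 * Qm * Qi := (mul_assoc _ _ _).symm
        _ = Qm * E21 1 * Qi := by rw [hM2Q]
    have hMpow : ∀ n : ℕ, M ^ n = Qm * E12 ((n : ZMod p) * d) * Qi := fun n => by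
      rw [hMconj, conj_pow hQQi hQiQ, E12_pow]
    have hM2pow : ∀ n : ℕ, M2 ^ n = Qm * E21 ((n : ZMod p)) * Qi := fun n => by
      rw [hM2conj, conj_pow hQQi hQiQ, E21_pow, mul_one]
    have hcollapse : ∀ A B : Matrix (Fin 2) (Fin 2) (ZMod p),
        (Qm * A * Qi) * (Qm * B * Qi) = Qm * (A * B) * Qi := by
      intro A B
      simp only [mul_assoc]
      rw [← mul_assoc Qi Qm, hQiQ, one_mul]
    rintro A ⟨S0, rfl⟩
    set S : Matrix (Fin 2) (Fin 2) (ZMod p) := (S0 : Matrix (Fin 2) (Fin 2) (ZMod p)) with hS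
    set T : Matrix (Fin 2) (Fin 2) (ZMod p) := Qi * S * Qm with hT
    have hdetT : T 0 0 * T 1 1 - T 0 1 * T 1 0 = 1 := by
      rw [← Matrix.det_fin_two, hT, Matrix.det_mul, Matrix.det_mul]
      have h1 : Qi.det * Qm.det = 1 := by rw [← Matrix.det_mul, hQiQ, Matrix.det_one]
      have h2 : S.det = 1 := S0.2
      rw [h2, mul_one]
      exact h1
    obtain ⟨r, x1, y1, z1, hdec⟩ := dec_full hdetT
    have ha1 : ((r.val : ℕ) : ZMod p) = r := by
      rw [ZMod.natCast_val, ZMod.cast_id]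
    have hb1 : (((x1 * d⁻¹).val : ℕ) : ZMod p) * d = x1 := by
      rw [ZMod.natCast_val, ZMod.cast_id, mul_assoc, inv_mul_cancel₀ hd, mul_one]
    have hc1 : ((y1.val : ℕ) : ZMod p) = y1 := by
      rw [ZMod.natCast_val, ZMod.cast_id]
    have he1 : (((z1 * d⁻¹).val : ℕ) : ZMod p) * d = z1 := by
      rw [ZMod.natCast_val, ZMod.cast_id, mul_assoc, inv_mul_cancel₀ hd, mul_one]
    have hh2G : (x * u * x⁻¹ : GL (Fin 2) (ZMod p)) ∈ G :=
      G.mul_mem (G.mul_mem hxG hgG) (G.inv_mem hxG)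
    have hfinal : SpecialLinearGroup.toGL S0
        = (x * u * x⁻¹) ^ r.val * u ^ (x1 * d⁻¹).val *
          (x * u * x⁻¹) ^ y1.val * u ^ (z1 * d⁻¹).val := by
      apply Units.ext
      have hv : (((x * u * x⁻¹) ^ r.val * u ^ (x1 * d⁻¹).val *
          (x * u * x⁻¹) ^ y1.val * u ^ (z1 * d⁻¹).val : GL (Fin 2) (ZMod p))
            : Matrix (Fin 2) (Fin 2) (ZMod p))
          = M2 ^ r.val * M ^ (x1 * d⁻¹).val * M2 ^ y1.val * M ^ (z1 * d⁻¹).val := by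
        rw [Units.val_mul, Units.val_mul, Units.val_mul,
          Units.val_pow_eq_pow_val, Units.val_pow_eq_pow_val,
          Units.val_pow_eq_pow_val, Units.val_pow_eq_pow_val, ← hM2, ← hM]
      rw [hv, hM2pow, hMpow, hM2pow, hMpow, ha1, hb1, hc1, he1,
        hcollapse, hcollapse, hcollapse, ← hdec]
      show S = Qm * (Qi * S * Qm) * Qi
      calc S = 1 * S * 1 := by rw [one_mul, mul_one]
        _ = (Qm * Qi) * S * (Qm * Qi) := by rw [hQQi]
        _ = Qm * (Qi * S * Qm) * Qi := by simp only [mul_assoc]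
    rw [hfinal]
    exact G.mul_mem (G.mul_mem (G.mul_mem (G.pow_mem hh2G _) (G.pow_mem hgG _))
      (G.pow_mem hh2G _)) (G.pow_mem hgG _)
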